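/- Let k₂ > 0 and define s₀(t) = 2·sinh²(√(k₂/2)·t) − √(2k₂)·t·cosh(√(k₂/2)·t)·sinh(√(k₂/2)·t), s₁(t) = −2√(2k₂³)·sinh(√(k₂/2)·t)·cosh(√(k₂/2)·t), s₂(t) = −2k₂·sinh²(√(k₂/2)·t). Let K = [[0, 0],[0, k₂ I]]. Then S(t) = ½·[[−(s₁(t)/s₀(t)) I, (s₂(t)/s₀(t)) I],[(s₂(t)/s₀(t)) I, −(s₀'(t)/s₀(t)) I]] solves the matrix Riccati equation S'(t) = S(t)C + Cᵀ S(t) + S(t) D S(t) − K for all t > 0, and S(t)⁻¹ → 0 as t → 0⁺. (This is the case k₁ = 0, k₂ > 0 of the explicit-solution lemma.) -/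

import Mathlib

noncomputable section
open Real Set Matrix Filter

/-- The `2n × 2n` matrix `C = [[0, −I], [0, 0]]` in `n × n` block form. -/
def Cmat (n : ℕ) : Matrix (Fin n ⊕ Fin n) (Fin n ⊕ Fin n) ℝ :=
  Matrix.fromBlocks 0 (-1) 0 0

/-- The `2n × 2n` matrix `D = [[0, 0], [0, 2I]]` in `n × n` block form. -/
def Dmat (n : ℕ) : Matrix (Fin n ⊕ Fin n) (Fin n ⊕ Fin n) ℝ :=
  Matrix.fromBlocks 0 0 0 ((2 : ℝ) • 1)

/-- The block-diagonal matrix `[[a·I, 0], [0, b·I]]`. -/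
def blockDiag (n : ℕ) (a b : ℝ) : Matrix (Fin n ⊕ Fin n) (Fin n ⊕ Fin n) ℝ :=
  Matrix.fromBlocks (a • 1) 0 0 (b • 1)

/-- The matrix `½·[[-(s₁/s₀)I, (s₂/s₀)I], [(s₂/s₀)I, -(s₀'/s₀)I]]`. -/
def harnackMatrix (n : ℕ) (s₀ s₁ s₂ : ℝ → ℝ) (t : ℝ) :
    Matrix (Fin n ⊕ Fin n) (Fin n ⊕ Fin n) ℝ :=
  (1/2 : ℝ) • Matrix.fromBlocks (-(s₁ t / s₀ t) • 1) ((s₂ t / s₀ t) • 1)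
    ((s₂ t / s₀ t) • 1) (-(deriv s₀ t / s₀ t) • 1)

/-- `s₀` in the case `k₁ = 0 < k₂`. -/
def s0D (k₂ t : ℝ) : ℝ :=
  2 * Real.sinh (Real.sqrt (k₂ / 2) * t) ^ 2
    - Real.sqrt (2 * k₂) * t * Real.cosh (Real.sqrt (k₂ / 2) * t) *
        Real.sinh (Real.sqrt (k₂ / 2) * t)

/-- `s₁` in the case `k₁ = 0 < k₂`. -/
def s1D (k₂ t : ℝ) : ℝ :=
  -2 * Real.sqrt (2 * k₂ ^ 3) * Real.sinh (Real.sqrt (k₂ / 2) * t) *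
    Real.cosh (Real.sqrt (k₂ / 2) * t)

/-- `s₂` in the case `k₁ = 0 < k₂`. -/
def s2D (k₂ t : ℝ) : ℝ := -2 * k₂ * Real.sinh (Real.sqrt (k₂ / 2) * t) ^ 2

namespace RH

lemma sinh_lt_mul_cosh {x : ℝ} (hx : 0 < x) : Real.sinh x < x * Real.cosh x := by
  have key : StrictMonoOn (fun y : ℝ => y * Real.cosh y - Real.sinh y) (Ici 0) := by
    apply strictMonoOn_of_deriv_pos (convex_Ici 0)
    · fun_prop
    · intro y hy
      rw [interior_Ici] at hy
      have h1 : HasDerivAt (fun y : ℝ => y * Real.cosh y - Real.sinh y)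
          (1 * Real.cosh y + y * Real.sinh y - Real.cosh y) y :=
        ((hasDerivAt_id y).mul (Real.hasDerivAt_cosh y)).sub (Real.hasDerivAt_sinh y)
      rw [h1.deriv]
      have hy' : (0:ℝ) < y := hy
      have := Real.sinh_pos_iff.mpr hy'
      nlinarith [mul_pos hy' this]
  have := key (self_mem_Ici) (le_of_lt hx) hx
  simp at this
  linarith

variable (k₂ b : ℝ)

lemma hbt (t : ℝ) : HasDerivAt (fun τ : ℝ => b * τ) b t := by
  simpa using (hasDerivAt_id t).const_mul b

lemma hct (c t : ℝ) : HasDerivAt (fun τ : ℝ => c * τ) c t := by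
  simpa using (hasDerivAt_id t).const_mul c

lemma hS (t : ℝ) : HasDerivAt (fun τ => Real.sinh (b * τ)) (b * Real.cosh (b * t)) t := by
  simpa [mul_comm, Function.comp_def] using (Real.hasDerivAt_sinh (b * t)).comp t (hbt b t)

lemma hC (t : ℝ) : HasDerivAt (fun τ => Real.cosh (b * τ)) (b * Real.sinh (b * t)) t := by
  simpa [mul_comm, Function.comp_def] using (Real.hasDerivAt_cosh (b * t)).comp t (hbt b t)

lemma s0D_eq (hsb : Real.sqrt (k₂ / 2) = b) (h2 : Real.sqrt (2 * k₂) = 2 * b) :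
    s0D k₂ = fun t => 2 * Real.sinh (b * t) ^ 2
      - 2 * b * t * Real.cosh (b * t) * Real.sinh (b * t) := by
  funext t; simp only [s0D, hsb, h2]

lemma s1D_eq (hsb : Real.sqrt (k₂ / 2) = b) (h3 : Real.sqrt (2 * k₂ ^ 3) = 2 * k₂ * b) :
    s1D k₂ = fun t => -4 * k₂ * b * (Real.sinh (b * t) * Real.cosh (b * t)) := by
  funext t; simp only [s1D, hsb, h3]; ring

lemma s2D_eq (hsb : Real.sqrt (k₂ / 2) = b) :
    s2D k₂ = fun t => -2 * k₂ * Real.sinh (b * t) ^ 2 := by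
  funext t; simp only [s2D, hsb]

lemma hasDerivAt_s0D (hsb : Real.sqrt (k₂ / 2) = b) (h2 : Real.sqrt (2 * k₂) = 2 * b)
    (t : ℝ) : HasDerivAt (s0D k₂)
      (2 * b * Real.sinh (b * t) * Real.cosh (b * t)
        - 2 * b ^ 2 * t * (Real.sinh (b * t) ^ 2 + Real.cosh (b * t) ^ 2)) t := by
  rw [s0D_eq k₂ b hsb h2]
  have h1 := ((hS b t).pow 2).const_mul (2 : ℝ)
  have h2' := (((hct (2*b) t).mul (hC b t)).mul (hS b t))
  convert h1.sub h2' using 1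
  any_goals rfl
  simp only [Pi.mul_apply]
  ring

lemma deriv_s0D (hsb : Real.sqrt (k₂ / 2) = b) (h2 : Real.sqrt (2 * k₂) = 2 * b) :
    deriv (s0D k₂) = fun t => 2 * b * Real.sinh (b * t) * Real.cosh (b * t)
      - 2 * b ^ 2 * t * (Real.sinh (b * t) ^ 2 + Real.cosh (b * t) ^ 2) :=
  funext fun t => (hasDerivAt_s0D k₂ b hsb h2 t).deriv

lemma hasDerivAt_s0D' (t : ℝ) :
    HasDerivAt (fun t => 2 * b * Real.sinh (b * t) * Real.cosh (b * t)
      - 2 * b ^ 2 * t * (Real.sinh (b * t) ^ 2 + Real.cosh (b * t) ^ 2))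
      (-8 * b ^ 3 * t * (Real.sinh (b * t) * Real.cosh (b * t))) t := by
  have h1 := ((hS b t).mul (hC b t)).const_mul (2 * b)
  have h2' := (hct (2 * b ^ 2) t).mul
    (((hS b t).pow 2).add ((hC b t).pow 2))
  convert h1.sub h2' using 1
  any_goals rfl
  · funext τ; simp only [Pi.mul_apply, Pi.add_apply, Pi.sub_apply, Pi.pow_apply]; ring
  · simp only [Pi.add_apply, Pi.pow_apply]; ring

lemma hasDerivAt_s1D (hsb : Real.sqrt (k₂ / 2) = b) (h3 : Real.sqrt (2 * k₂ ^ 3) = 2 * k₂ * b)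
    (t : ℝ) : HasDerivAt (s1D k₂)
      (-4 * k₂ * b ^ 2 * (Real.cosh (b * t) ^ 2 + Real.sinh (b * t) ^ 2)) t := by
  rw [s1D_eq k₂ b hsb h3]
  have h1 := ((hS b t).mul (hC b t)).const_mul (-4 * k₂ * b)
  convert h1 using 1
  any_goals rfl
  ring

lemma hasDerivAt_s2D (hsb : Real.sqrt (k₂ / 2) = b) (t : ℝ) :
    HasDerivAt (s2D k₂) (-4 * k₂ * b * (Real.sinh (b * t) * Real.cosh (b * t))) t := by
  rw [s2D_eq k₂ b hsb]
  have h1 := ((hS b t).pow 2).const_mul (-2 * k₂)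
  convert h1 using 1
  any_goals rfl
  ring

lemma s0_neg (hb : 0 < b) (hsb : Real.sqrt (k₂ / 2) = b) (h2 : Real.sqrt (2 * k₂) = 2 * b)
    {t : ℝ} (ht : 0 < t) : s0D k₂ t < 0 := by
  have hbt0 : 0 < b * t := by positivity
  have hSpos : 0 < Real.sinh (b * t) := Real.sinh_pos_iff.mpr hbt0
  have hlt := sinh_lt_mul_cosh hbt0
  rw [s0D_eq k₂ b hsb h2]
  simp only
  nlinarith [mul_pos hSpos (sub_pos.mpr hlt)]

lemma rhs_eq (n : ℕ) (f g h : ℝ) :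
    ((1/2:ℝ) • Matrix.fromBlocks ((-f) • 1) (g • 1) (g • 1) ((-h) • (1:Matrix (Fin n) (Fin n) ℝ))) * Cmat n
      + (Cmat n)ᵀ * ((1/2:ℝ) • Matrix.fromBlocks ((-f) • 1) (g • 1) (g • 1) ((-h) • 1))
      + ((1/2:ℝ) • Matrix.fromBlocks ((-f) • 1) (g • 1) (g • 1) ((-h) • 1)) * Dmat n *
          ((1/2:ℝ) • Matrix.fromBlocks ((-f) • 1) (g • 1) (g • 1) ((-h) • 1))
      - _root_.blockDiag n 0 k₂
    = Matrix.fromBlocks ((g^2/2) • 1) (((f - g*h)/2) • 1) (((f - g*h)/2) • 1)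
        ((-g + h^2/2 - k₂) • 1) := by
  unfold Cmat Dmat _root_.blockDiag
  simp only [Matrix.smul_mul, Matrix.mul_smul, Matrix.fromBlocks_transpose,
    Matrix.fromBlocks_multiply, Matrix.fromBlocks_smul, smul_smul, sub_eq_add_neg,
    Matrix.fromBlocks_neg, Matrix.fromBlocks_add]
  ext i j
  rcases i with i|i <;> rcases j with j|j <;>
    simp [Matrix.fromBlocks, Matrix.one_apply, Matrix.smul_mul, Matrix.mul_smul,
      smul_smul, Matrix.smul_apply, Matrix.add_apply, Matrix.neg_apply, mul_comm] <;>
    split <;> ring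

lemma blocks_mul (n : ℕ) (p q r f g h : ℝ)
    (h11 : p * -f + q * g = 2) (h12 : p * g + q * -h = 0)
    (h21 : q * -f + r * g = 0) (h22 : q * g + r * -h = 2) :
    (Matrix.fromBlocks (p • 1) (q • 1) (q • 1) (r • 1) : Matrix (Fin n ⊕ Fin n) (Fin n ⊕ Fin n) ℝ) *
      ((1/2 : ℝ) • Matrix.fromBlocks ((-f) • 1) (g • 1) (g • 1) ((-h) • 1)) = 1 := by
  simp only [Matrix.mul_smul, Matrix.fromBlocks_multiply, Matrix.smul_mul, smul_smul,
    Matrix.fromBlocks_smul]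
  ext i j
  rcases i with i|i <;> rcases j with j|j <;>
    simp [Matrix.fromBlocks, Matrix.one_apply, Matrix.smul_mul, Matrix.mul_smul,
      smul_smul, Matrix.smul_apply, Matrix.add_apply] <;>
    split
  · linear_combination h11 / 2
  · ring
  · linear_combination h12 / 2
  · ring
  · linear_combination h21 / 2
  · ring
  · linear_combination h22 / 2
  · ring

def Pf (b t : ℝ) : ℝ :=
  (Real.sinh (b*t) * Real.cosh (b*t) - b*t*(Real.sinh (b*t)^2 + Real.cosh (b*t)^2)) /
    (2*b^3*(Real.sinh (b*t)^2 + Real.cosh (b*t)^2))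

def Qf (b t : ℝ) : ℝ :=
  -(Real.sinh (b*t)^2) / (b^2*(Real.sinh (b*t)^2 + Real.cosh (b*t)^2))

def Rf (b t : ℝ) : ℝ :=
  -(2*Real.sinh (b*t)*Real.cosh (b*t)) / (b*(Real.sinh (b*t)^2 + Real.cosh (b*t)^2))

lemma sumsq_pos (b t : ℝ) : 0 < Real.sinh (b*t)^2 + Real.cosh (b*t)^2 := by
  nlinarith [Real.cosh_pos (b*t), sq_nonneg (Real.sinh (b*t))]

lemma tendsto_Pf (hb : 0 < b) : Tendsto (Pf b) (nhds 0) (nhds 0) := by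
  have hc : Continuous (Pf b) := by
    unfold Pf
    apply Continuous.div (by fun_prop) (by fun_prop)
    intro t
    have := sumsq_pos b t
    positivity
  have h0 : Pf b 0 = 0 := by simp [Pf]
  simpa [h0] using hc.tendsto 0

lemma tendsto_Qf (hb : 0 < b) : Tendsto (Qf b) (nhds 0) (nhds 0) := by
  have hc : Continuous (Qf b) := by
    unfold Qf
    apply Continuous.div (by fun_prop) (by fun_prop)
    intro t
    have := sumsq_pos b t
    positivity
  have h0 : Qf b 0 = 0 := by simp [Qf]
  simpa [h0] using hc.tendsto 0

lemma tendsto_Rf (hb : 0 < b) : Tendsto (Rf b) (nhds 0) (nhds 0) := by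
  have hc : Continuous (Rf b) := by
    unfold Rf
    apply Continuous.div (by fun_prop) (by fun_prop)
    intro t
    have := sumsq_pos b t
    positivity
  have h0 : Rf b 0 = 0 := by simp [Rf]
  simpa [h0] using hc.tendsto 0

end RH

/-- **Explicit solution of the Riccati equation, case `k₁ = 0 < k₂`** (Lemma 3.3 (4)). -/
theorem riccati_explicit_case4 (n : ℕ) (hn : 1 ≤ n) (k₂ : ℝ) (hk₂ : 0 < k₂) :
    (∀ t : ℝ, 0 < t →
      ∀ i j, HasDerivAt (fun τ => harnackMatrix n (s0D k₂) (s1D k₂) (s2D k₂) τ i j)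
        ((harnackMatrix n (s0D k₂) (s1D k₂) (s2D k₂) t * Cmat n
          + (Cmat n)ᵀ * harnackMatrix n (s0D k₂) (s1D k₂) (s2D k₂) t
          + harnackMatrix n (s0D k₂) (s1D k₂) (s2D k₂) t * Dmat n *
              harnackMatrix n (s0D k₂) (s1D k₂) (s2D k₂) t
          - blockDiag n 0 k₂) i j) t) ∧
    (∀ i j, Tendsto (fun t => (harnackMatrix n (s0D k₂) (s1D k₂) (s2D k₂) t)⁻¹ i j)
      (nhdsWithin 0 (Ioi 0)) (nhds 0)) := by
  set b := Real.sqrt (k₂ / 2) with hbdef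
  have hb : 0 < b := Real.sqrt_pos.mpr (by linarith)
  have hsb : Real.sqrt (k₂ / 2) = b := rfl
  have hb2 : b ^ 2 = k₂ / 2 := Real.sq_sqrt (by linarith)
  have hk : k₂ = 2 * b ^ 2 := by rw [hb2]; ring
  have h2 : Real.sqrt (2 * k₂) = 2 * b := by
    have : 2 * k₂ = (2 * b) ^ 2 := by rw [mul_pow]; rw [hb2]; ring
    rw [this, Real.sqrt_sq (by positivity)]
  have h3 : Real.sqrt (2 * k₂ ^ 3) = 2 * k₂ * b := by
    have : 2 * k₂ ^ 3 = (2 * k₂ * b) ^ 2 := by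
      rw [mul_pow, mul_pow, hb2]; ring
    rw [this, Real.sqrt_sq (by positivity)]
  constructor
  · intro t ht i j
    have hs0neg := RH.s0_neg k₂ b hb hsb h2 ht
    have hs0ne : s0D k₂ t ≠ 0 := ne_of_lt hs0neg
    have e0 : s0D k₂ t = 2 * Real.sinh (b * t) ^ 2
        - 2 * b * t * Real.cosh (b * t) * Real.sinh (b * t) := by
      rw [RH.s0D_eq k₂ b hsb h2]
    have e1 : s1D k₂ t = -4 * k₂ * b * (Real.sinh (b * t) * Real.cosh (b * t)) := by
      rw [RH.s1D_eq k₂ b hsb h3]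
    have e2 : s2D k₂ t = -2 * k₂ * Real.sinh (b * t) ^ 2 := by
      rw [RH.s2D_eq k₂ b hsb]
    have e0' : deriv (s0D k₂) t = 2 * b * Real.sinh (b * t) * Real.cosh (b * t)
        - 2 * b ^ 2 * t * (Real.sinh (b * t) ^ 2 + Real.cosh (b * t) ^ 2) := by
      rw [RH.deriv_s0D k₂ b hsb h2]
    -- the three scalar derivative facts
    have hf : HasDerivAt (fun τ => -(s1D k₂ τ / s0D k₂ τ))
        ((s2D k₂ t / s0D k₂ t) ^ 2) t := by
      have := ((RH.hasDerivAt_s1D k₂ b hsb h3 t).div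
        (RH.hasDerivAt_s0D k₂ b hsb h2 t) hs0ne).neg
      convert this using 1
      any_goals rfl
      rw [e1, e2, e0]
      rw [e0] at hs0ne
      rw [hk]
      field_simp
      ring
    have hg : HasDerivAt (fun τ => s2D k₂ τ / s0D k₂ τ)
        (s1D k₂ t / s0D k₂ t - s2D k₂ t / s0D k₂ t * (deriv (s0D k₂) t / s0D k₂ t)) t := by
      have := (RH.hasDerivAt_s2D k₂ b hsb t).div
        (RH.hasDerivAt_s0D k₂ b hsb h2 t) hs0ne
      convert this using 1
      any_goals rfl
      rw [e1, e2, e0, e0']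
      rw [e0] at hs0ne
      field_simp
    have hh : HasDerivAt (fun τ => -(deriv (s0D k₂) τ / s0D k₂ τ))
        (-2 * (s2D k₂ t / s0D k₂ t) + (deriv (s0D k₂) t / s0D k₂ t) ^ 2 - 2 * k₂) t := by
      rw [RH.deriv_s0D k₂ b hsb h2]
      have := ((RH.hasDerivAt_s0D' b t).div
        (RH.hasDerivAt_s0D k₂ b hsb h2 t) hs0ne).neg
      convert this using 1
      any_goals rfl
      rw [e2, e0]
      rw [e0] at hs0ne
      rw [hk]
      beta_reduce
      have hq : Real.sinh (b * t) - b * t * Real.cosh (b * t) ≠ 0 := fun h => hs0ne (by linear_combination 2 * Real.sinh (b * t) * h)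
      field_simp
      ring
    have hrhs : harnackMatrix n (s0D k₂) (s1D k₂) (s2D k₂) t * Cmat n
          + (Cmat n)ᵀ * harnackMatrix n (s0D k₂) (s1D k₂) (s2D k₂) t
          + harnackMatrix n (s0D k₂) (s1D k₂) (s2D k₂) t * Dmat n *
              harnackMatrix n (s0D k₂) (s1D k₂) (s2D k₂) t
          - blockDiag n 0 k₂
        = Matrix.fromBlocks (((s2D k₂ t / s0D k₂ t)^2/2) • 1)
            (((s1D k₂ t / s0D k₂ t - (s2D k₂ t / s0D k₂ t)*(deriv (s0D k₂) t / s0D k₂ t))/2) • 1)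
            (((s1D k₂ t / s0D k₂ t - (s2D k₂ t / s0D k₂ t)*(deriv (s0D k₂) t / s0D k₂ t))/2) • 1)
            ((-(s2D k₂ t / s0D k₂ t) + (deriv (s0D k₂) t / s0D k₂ t)^2/2 - k₂) • 1) := by
      simp only [harnackMatrix]
      exact RH.rhs_eq k₂ n (s1D k₂ t / s0D k₂ t) (s2D k₂ t / s0D k₂ t)
        (deriv (s0D k₂) t / s0D k₂ t)
    rw [hrhs]
    simp only [harnackMatrix]
    obtain i | i := i <;> obtain j | j := j
    · simp only [Matrix.smul_apply, Matrix.fromBlocks_apply₁₁, smul_eq_mul]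
      have h' := (hf.mul_const ((1 : Matrix (Fin n) (Fin n) ℝ) i j)).const_mul (1/2 : ℝ)
      convert h' using 1
      any_goals rfl
      ring
    · simp only [Matrix.smul_apply, Matrix.fromBlocks_apply₁₂, smul_eq_mul]
      have h' := (hg.mul_const ((1 : Matrix (Fin n) (Fin n) ℝ) i j)).const_mul (1/2 : ℝ)
      convert h' using 1
      any_goals rfl
      ring
    · simp only [Matrix.smul_apply, Matrix.fromBlocks_apply₂₁, smul_eq_mul]
      have h' := (hg.mul_const ((1 : Matrix (Fin n) (Fin n) ℝ) i j)).const_mul (1/2 : ℝ)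
      convert h' using 1
      any_goals rfl
      ring
    · simp only [Matrix.smul_apply, Matrix.fromBlocks_apply₂₂, smul_eq_mul]
      have h' := (hh.mul_const ((1 : Matrix (Fin n) (Fin n) ℝ) i j)).const_mul (1/2 : ℝ)
      convert h' using 1
      any_goals rfl
      ring
  · intro i j
    have key : ∀ t : ℝ, 0 < t → (harnackMatrix n (s0D k₂) (s1D k₂) (s2D k₂) t)⁻¹
        = Matrix.fromBlocks (RH.Pf b t • 1) (RH.Qf b t • 1) (RH.Qf b t • 1) (RH.Rf b t • 1) := by
      intro t ht
      have hs0neg := RH.s0_neg k₂ b hb hsb h2 ht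
      have hs0ne : s0D k₂ t ≠ 0 := ne_of_lt hs0neg
      have e0 : s0D k₂ t = 2 * Real.sinh (b * t) ^ 2
          - 2 * b * t * Real.cosh (b * t) * Real.sinh (b * t) := by
        rw [RH.s0D_eq k₂ b hsb h2]
      have e1 : s1D k₂ t = -4 * k₂ * b * (Real.sinh (b * t) * Real.cosh (b * t)) := by
        rw [RH.s1D_eq k₂ b hsb h3]
      have e2 : s2D k₂ t = -2 * k₂ * Real.sinh (b * t) ^ 2 := by
        rw [RH.s2D_eq k₂ b hsb]
      have e0' : deriv (s0D k₂) t = 2 * b * Real.sinh (b * t) * Real.cosh (b * t)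
          - 2 * b ^ 2 * t * (Real.sinh (b * t) ^ 2 + Real.cosh (b * t) ^ 2) := by
        rw [RH.deriv_s0D k₂ b hsb h2]
      have hs0ne' : 2 * Real.sinh (b * t) ^ 2
          - 2 * b * t * Real.cosh (b * t) * Real.sinh (b * t) ≠ 0 := e0 ▸ hs0ne
      have hd : Real.sinh (b*t)^2 + Real.cosh (b*t)^2 ≠ 0 := (RH.sumsq_pos b t).ne'
      apply Matrix.inv_eq_left_inv
      simp only [harnackMatrix]
      apply RH.blocks_mul
      · simp only [RH.Pf, RH.Qf]
        rw [e1, e2, e0, hk]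
        have hq : Real.sinh (b * t) - b * t * Real.cosh (b * t) ≠ 0 := fun h => hs0ne' (by linear_combination 2 * Real.sinh (b * t) * h)
        field_simp
        ring
      · simp only [RH.Pf, RH.Qf]
        rw [e2, e0, e0', hk]
        field_simp
        ring
      · simp only [RH.Qf, RH.Rf]
        rw [e1, e2, e0, hk]
        field_simp
        ring
      · simp only [RH.Qf, RH.Rf]
        rw [e2, e0, e0', hk]
        have hq : Real.sinh (b * t) - b * t * Real.cosh (b * t) ≠ 0 := fun h => hs0ne' (by linear_combination 2 * Real.sinh (b * t) * h)
        field_simp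
        ring
    obtain i | i := i <;> obtain j | j := j
    · have hPt := ((RH.tendsto_Pf b hb).mono_left (nhdsWithin_le_nhds (s := Ioi (0:ℝ)))).mul_const
        ((1 : Matrix (Fin n) (Fin n) ℝ) i j)
      rw [zero_mul] at hPt
      refine hPt.congr' ?_
      filter_upwards [self_mem_nhdsWithin] with t ht
      rw [key t ht]
      simp [Matrix.fromBlocks_apply₁₁, Matrix.smul_apply, smul_eq_mul]
    · have hPt := ((RH.tendsto_Qf b hb).mono_left (nhdsWithin_le_nhds (s := Ioi (0:ℝ)))).mul_const
        ((1 : Matrix (Fin n) (Fin n) ℝ) i j)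
      rw [zero_mul] at hPt
      refine hPt.congr' ?_
      filter_upwards [self_mem_nhdsWithin] with t ht
      rw [key t ht]
      simp [Matrix.fromBlocks_apply₁₂, Matrix.smul_apply, smul_eq_mul]
    · have hPt := ((RH.tendsto_Qf b hb).mono_left (nhdsWithin_le_nhds (s := Ioi (0:ℝ)))).mul_const
        ((1 : Matrix (Fin n) (Fin n) ℝ) i j)
      rw [zero_mul] at hPt
      refine hPt.congr' ?_
      filter_upwards [self_mem_nhdsWithin] with t ht
      rw [key t ht]
      simp [Matrix.fromBlocks_apply₂₁, Matrix.smul_apply, smul_eq_mul]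
    · have hPt := ((RH.tendsto_Rf b hb).mono_left (nhdsWithin_le_nhds (s := Ioi (0:ℝ)))).mul_const
        ((1 : Matrix (Fin n) (Fin n) ℝ) i j)
      rw [zero_mul] at hPt
      refine hPt.congr' ?_
      filter_upwards [self_mem_nhdsWithin] with t ht
      rw [key t ht]
      simp [Matrix.fromBlocks_apply₂₂, Matrix.smul_apply, smul_eq_mul]
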